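/- Let Λ be a rank-2 lattice in ℝ³ whose fundamental parallelogram has area d², and suppose every nonzero vector of Λ has squared length divisible by d². Then Λ contains a vector of length exactly d. -/
import Mathlib

def dotR (a b : Fin 3 → ℝ) : ℝ := a 0 * b 0 + a 1 * b 1 + a 2 * b 2

def crossR (a b : Fin 3 → ℝ) : Fin 3 → ℝ :=
  ![a 1 * b 2 - a 2 * b 1, a 2 * b 0 - a 0 * b 2, a 0 * b 1 - a 1 * b 0]


/-- A positive definite integral binary quadratic form `a m² + b m n + c n²`
with `4ac - b² = 4` represents `1`. Gauss reduction / descent on `a`. -/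
lemma repOne : ∀ (N : ℕ) (a b c : ℤ), a.toNat ≤ N → 0 < a → 4*a*c - b^2 = 4 →
    ∃ m n : ℤ, a*m^2 + b*m*n + c*n^2 = 1 := by
  intro N
  induction N with
  | zero => intro a b c hle ha _; omega
  | succ N IH =>
    intro a b c hle ha hdet
    rcases eq_or_lt_of_le (by omega : (1:ℤ) ≤ a) with h1 | h2
    · exact ⟨1, 0, by rw [← h1]; ring⟩
    · -- a ≥ 2 : descend
      set q := b / (2*a) with hq
      set r := b % (2*a) with hr
      have h2a : (0:ℤ) < 2*a := by omega
      have hr0 : 0 ≤ r := Int.emod_nonneg b (by omega)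
      have hr2 : r < 2*a := Int.emod_lt_of_pos b h2a
      have hbqr : 2*a*q + r = b := Int.mul_ediv_add_emod b (2*a)
      set t : ℤ := if r ≤ a then -q else -(q+1) with ht
      set s : ℤ := 2*a*t + b with hs
      have hs2 : s^2 ≤ a^2 := by
        rcases le_or_gt r a with h | h
        · have : s = r := by simp only [hs, ht, if_pos h]; linear_combination -hbqr
          nlinarith
        · have : s = r - 2*a := by simp only [hs, ht, if_neg (not_le.2 h)]; linear_combination -hbqr
          nlinarith
      have hkey : 4*a*(a*t^2+b*t+c) = s^2 + 4 := by
        rw [hs]; linear_combination hdet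
      have ha' : 0 < a*t^2+b*t+c := by nlinarith [sq_nonneg s]
      have halt : a*t^2+b*t+c < a := by nlinarith
      have hdet' : 4*(a*t^2+b*t+c)*a - s^2 = 4 := by rw [hs]; linear_combination hdet
      obtain ⟨m, n, hmn⟩ := IH (a*t^2+b*t+c) s a (by omega) ha' hdet'
      exact ⟨t*m+n, m, by rw [hs] at hmn; linear_combination hmn⟩

/-- A rank-2 lattice in `ℝ³` with fundamental parallelogram of area `d²`, all of
whose nonzero vectors have squared length divisible by `d²`, contains a vector of
length exactly `d`. (The lattice is `ℤu + ℤw`; the area is `‖u × w‖`.) -/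
theorem planar_lattice_short_vector (d : ℕ) (hd : 0 < d) (u w : Fin 3 → ℝ)
    (hind : LinearIndependent ℝ ![u, w])
    (harea : dotR (crossR u w) (crossR u w) = (d : ℝ)^4)
    (hdiv : ∀ m n : ℤ, ¬(m = 0 ∧ n = 0) →
      ∃ k : ℤ, dotR (m • u + n • w) (m • u + n • w) = (d : ℝ)^2 * k) :
    ∃ m n : ℤ, dotR (m • u + n • w) (m • u + n • w) = (d : ℝ)^2 := by
  have hd2 : (0:ℝ) < (d:ℝ)^2 := by positivity
  obtain ⟨ka, hA⟩ := hdiv 1 0 (by simp)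
  obtain ⟨kc, hC⟩ := hdiv 0 1 (by simp)
  obtain ⟨ke, hE⟩ := hdiv 1 1 (by simp)
  simp only [one_smul, zero_smul, add_zero, zero_add] at hA hC hE
  -- u ≠ 0
  have hu : u ≠ 0 := by
    have := hind.ne_zero 0
    simpa using this
  have hApos : 0 < dotR u u := by
    have hnn : (0:ℝ) ≤ dotR u u := by
      unfold dotR; nlinarith [sq_nonneg (u 0), sq_nonneg (u 1), sq_nonneg (u 2)]
    rcases lt_or_eq_of_le hnn with h | h
    · exact h
    · exfalso; apply hu
      have h0 : u 0 = 0 := by unfold dotR at h; nlinarith [sq_nonneg (u 0), sq_nonneg (u 1), sq_nonneg (u 2)]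
      have h1 : u 1 = 0 := by unfold dotR at h; nlinarith [sq_nonneg (u 0), sq_nonneg (u 1), sq_nonneg (u 2)]
      have h2 : u 2 = 0 := by unfold dotR at h; nlinarith [sq_nonneg (u 0), sq_nonneg (u 1), sq_nonneg (u 2)]
      funext i; fin_cases i <;> assumption
  have hkaR : (0:ℝ) < (ka:ℝ) := by
    have := hA ▸ hApos
    nlinarith
  have hka : 0 < ka := by exact_mod_cast hkaR
  -- Lagrange identity
  have hlag : dotR (crossR u w) (crossR u w)
      = dotR u u * dotR w w - (dotR u w)^2 := by
    simp only [dotR, crossR, Matrix.cons_val_zero, Matrix.cons_val_one, Matrix.head_cons,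
      Matrix.cons_val_two, Matrix.tail_cons]
    ring
  -- 2B = d² * (ke - ka - kc)
  have hB : 2 * dotR u w = (d:ℝ)^2 * ((ke - ka - kc : ℤ) : ℝ) := by
    have hEexp : dotR (u + w) (u + w) = dotR u u + 2 * dotR u w + dotR w w := by
      simp only [dotR, Pi.add_apply]; ring
    push_cast
    rw [hEexp] at hE
    linear_combination hE - hA - hC
  -- integral determinant equation
  have hdet : 4 * ka * kc - (ke - ka - kc)^2 = 4 := by
    have hthis : dotR u u * dotR w w - dotR u w ^ 2 = (d:ℝ)^4 := hlag ▸ harea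
    push_cast at hB
    have h4 : (d:ℝ)^4 * ((4 * ka * kc - (ke - ka - kc)^2 : ℤ) : ℝ)
        = (d:ℝ)^4 * ((4:ℤ) : ℝ) := by
      push_cast
      linear_combination 4*hthis - (4 * dotR w w)*hA - (4*(d:ℝ)^2*(ka:ℝ))*hC
        + (2*dotR u w + (d:ℝ)^2*((ke:ℝ)-(ka:ℝ)-(kc:ℝ)))*hB
    have h4' : (0:ℝ) < (d:ℝ)^4 := by positivity
    exact_mod_cast mul_left_cancel₀ (ne_of_gt h4') h4
  obtain ⟨m, n, hmn⟩ := repOne ka.toNat ka (ke - ka - kc) kc le_rfl hka hdet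
  refine ⟨m, n, ?_⟩
  have hI : (ka:ℝ)*(m:ℝ)^2 + ((ke:ℝ)-(ka:ℝ)-(kc:ℝ))*(m:ℝ)*(n:ℝ) + (kc:ℝ)*(n:ℝ)^2 = 1 := by
    exact_mod_cast hmn
  simp only [dotR, Pi.add_apply, Pi.smul_apply, zsmul_eq_mul, Pi.mul_apply, Pi.intCast_apply]
  simp only [dotR] at hA hC hB
  push_cast at hB
  linear_combination ((m:ℝ)^2) * hA + ((n:ℝ)^2) * hC + ((m:ℝ)*(n:ℝ)) * hB + (d:ℝ)^2 * hI
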